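/- In the right-angled setting, every special sequence of words w₀, w₁, …, w_m over S ∪ S⁻¹ (each w_k obtained from w_{k−1} by a special transformation of type 0, 1, 2, or ∞) lifts to a special sequence of augmented words w̃₀, w̃₁, …, w̃_m over the indexed alphabet Ŝ such that w̃₀ = w₀ (all indices zero), φ(w̃_k) = w_k for all k, and each step of the augmented sequence has the same type as the corresponding step of the original sequence. -/

import Mathlib

namespace ArtinConj

/-- A word over `S ∪ S⁻¹`. -/
abbrev Word (S : Type) := List (S × Bool)

/-- The type of a special transformation: `0`, `1`, `2`, or `∞`. -/
inductive TType : Type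
  | t0 | t1 | t2 | tinf
  deriving DecidableEq

/-- Special transformations on words for a right-angled presentation whose
commutation relations are given by `rel` : type `0` removes a trivial pair,
types `1` and `2` commute adjacent letters (with equal, resp. opposite, signs)
whose generators commute, and type `∞` inserts a trivial pair. -/
inductive RStep {S : Type} (rel : S → S → Prop) : TType → Word S → Word S → Prop
  | free (w₁ w₂ : Word S) (s : S) (e : Bool) :
      RStep rel .t0 (w₁ ++ [(s, e), (s, !e)] ++ w₂) (w₁ ++ w₂)
  | comm1 (w₁ w₂ : Word S) (s t : S) (e : Bool) (h : rel s t) :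
      RStep rel .t1 (w₁ ++ [(s, e), (t, e)] ++ w₂) (w₁ ++ [(t, e), (s, e)] ++ w₂)
  | comm2 (w₁ w₂ : Word S) (s t : S) (e : Bool) (h : rel s t) :
      RStep rel .t2 (w₁ ++ [(s, e), (t, !e)] ++ w₂) (w₁ ++ [(t, !e), (s, e)] ++ w₂)
  | ins (w₁ w₂ : Word S) (s : S) (e : Bool) :
      RStep rel .tinf (w₁ ++ w₂) (w₁ ++ [(s, e), (s, !e)] ++ w₂)

/-- An augmented word: letters carry an index (their "age"). -/
abbrev AWord (S : Type) := List ((S × ℕ) × Bool)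

/-- Forgetting the indices of an augmented word. -/
def forgetIdx {S : Type} (w : AWord S) : Word S := w.map fun p => (p.1.1, p.2)

/-- The augmented word with all indices zero associated to a word. -/
def withZero {S : Type} (w : Word S) : AWord S := w.map fun p => ((p.1, 0), p.2)

/-- Renaming the occurrences of `s[i]` and `s[j]` to `s[min i j]`. -/
def rename {S : Type} [DecidableEq S] (s : S) (i j : ℕ) (w : AWord S) : AWord S :=
  w.map fun p =>
    if p.1.1 = s ∧ (p.1.2 = i ∨ p.1.2 = j) then ((s, min i j), p.2) else p

/-- The projection `π_h` erasing all letters of index `≥ h`. -/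
def proj {S : Type} (h : ℕ) (w : AWord S) : AWord S :=
  w.filter fun p => p.1.2 < h

/-- The projection `π₁` to ordinary words: erase all letters of positive index
and identify `s[0]` with `s`. -/
def projOne {S : Type} (w : AWord S) : Word S :=
  forgetIdx (proj 1 w)

/-- Augmented special transformations: type `0` removes a pair
`s[i]^ε s[j]^{−ε}` and renames all remaining occurrences of `s[i]`, `s[j]` to
`s[min i j]`; types `1` and `2` commute adjacent letters whose generators
commute; type `∞` inserts a pair `s[i]^ε s[i]^{−ε}` with `i` strictly larger
than every index occurring in the word. -/
inductive AStep {S : Type} [DecidableEq S] (rel : S → S → Prop) :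
    TType → AWord S → AWord S → Prop
  | free (w₁ w₂ : AWord S) (s : S) (i j : ℕ) (e : Bool) :
      AStep rel .t0 (w₁ ++ [((s, i), e), ((s, j), !e)] ++ w₂) (rename s i j (w₁ ++ w₂))
  | comm1 (w₁ w₂ : AWord S) (s t : S) (i j : ℕ) (e : Bool) (h : rel s t) :
      AStep rel .t1 (w₁ ++ [((s, i), e), ((t, j), e)] ++ w₂)
        (w₁ ++ [((t, j), e), ((s, i), e)] ++ w₂)
  | comm2 (w₁ w₂ : AWord S) (s t : S) (i j : ℕ) (e : Bool) (h : rel s t) :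
      AStep rel .t2 (w₁ ++ [((s, i), e), ((t, j), !e)] ++ w₂)
        (w₁ ++ [((t, j), !e), ((s, i), e)] ++ w₂)
  | ins (w₁ w₂ : AWord S) (s : S) (i : ℕ) (e : Bool)
      (h : ∀ p ∈ w₁ ++ w₂, p.1.2 < i) :
      AStep rel .tinf (w₁ ++ w₂) (w₁ ++ [((s, i), e), ((s, i), !e)] ++ w₂)

/-- An augmented word is regular if, for every `h ≥ 1`, either it contains no
letter of index `h`, or it contains exactly two, forming a commutative
`h`-pair: `r[h]^ε v r[h]^{−ε}` where `r` commutes with every generator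
occurring in `v` with index `< h`. -/
def Regular {S : Type} (rel : S → S → Prop) (w : AWord S) : Prop :=
  ∀ h : ℕ, 1 ≤ h →
    (∀ p ∈ w, p.1.2 ≠ h) ∨
    ∃ (w₁ v w₂ : AWord S) (r : S) (e : Bool),
      w = w₁ ++ [((r, h), e)] ++ v ++ [((r, h), !e)] ++ w₂ ∧
      (∀ p ∈ w₁ ++ v ++ w₂, p.1.2 ≠ h) ∧
      (∀ p ∈ v, p.1.2 < h → rel r p.1.1)

/-- every special sequence of words (for a right-angled
presentation with commutation relation `rel`) lifts to a special sequence of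
augmented words, starting from the all-indices-zero lift of the first word,
projecting back to the original sequence, and with steps of the same types. -/
lemma forgetIdx_append {S : Type} (a b : AWord S) :
    forgetIdx (a ++ b) = forgetIdx a ++ forgetIdx b := by
  simp [forgetIdx]

lemma forgetIdx_withZero {S : Type} (u : Word S) : forgetIdx (withZero u) = u := by
  induction u with
  | nil => rfl
  | cons p l ih => simp [forgetIdx, withZero] at ih ⊢; exact ih

lemma forgetIdx_rename {S : Type} [DecidableEq S] (s : S) (i j : ℕ) (w : AWord S) :
    forgetIdx (rename s i j w) = forgetIdx w := by
  simp only [forgetIdx, rename, List.map_map]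
  apply List.map_congr_left
  intro p _
  by_cases h : p.1.1 = s ∧ (p.1.2 = i ∨ p.1.2 = j)
  · simp [h, h.1]
  · simp [h]

lemma forget_split {S : Type} {tw : AWord S} {u v : Word S}
    (h : forgetIdx tw = u ++ v) :
    ∃ a b, tw = a ++ b ∧ forgetIdx a = u ∧ forgetIdx b = v := by
  rcases List.map_eq_append_iff.mp h with ⟨a, b, h1, h2, h3⟩
  exact ⟨a, b, h1, h2, h3⟩

lemma forget_cons {S : Type} {tw : AWord S} {s : S} {e : Bool} {v : Word S}
    (h : forgetIdx tw = (s, e) :: v) :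
    ∃ (i : ℕ) (b : AWord S), tw = ((s, i), e) :: b ∧ forgetIdx b = v := by
  rcases List.map_eq_cons_iff.mp h with ⟨p, b, h1, h2, h3⟩
  refine ⟨p.1.2, b, ?_, h3⟩
  have : p = ((s, p.1.2), e) := by
    obtain ⟨⟨s', i'⟩, e'⟩ := p
    simp at h2 ⊢
    exact ⟨h2.1, h2.2⟩
  rwa [this] at h1

lemma le_foldr_max (l : List ℕ) : ∀ x ∈ l, x ≤ l.foldr max 0 := by
  induction l with
  | nil => simp
  | cons a l ih =>
    intro x hx
    rcases List.mem_cons.mp hx with rfl | hx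
    · simp
    · exact le_trans (ih x hx) (le_max_right _ _)

lemma step_lift {S : Type} [DecidableEq S] {rel : S → S → Prop} {t : TType}
    {u v : Word S} (h : RStep rel t u v) (tw : AWord S)
    (hf : forgetIdx tw = u) :
    ∃ tw', AStep rel t tw tw' ∧ forgetIdx tw' = v := by
  induction h with
  | free w₁ w₂ s e =>
    rw [List.append_assoc] at hf
    rcases forget_split hf with ⟨a, rest, rfl, ha, hrest⟩
    rw [show ([(s, e), (s, !e)] ++ w₂ : Word S) = (s, e) :: ((s, !e) :: w₂) from rfl]
      at hrest
    rcases forget_cons hrest with ⟨i, rest2, rfl, hrest2⟩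
    rcases forget_cons hrest2 with ⟨j, b, rfl, hb⟩
    refine ⟨rename s i j (a ++ b), ?_, ?_⟩
    · simpa using AStep.free (rel := rel) a b s i j e
    · rw [forgetIdx_rename, forgetIdx_append, ha, hb]
  | comm1 w₁ w₂ s t' e hrel =>
    rw [List.append_assoc] at hf
    rcases forget_split hf with ⟨a, rest, rfl, ha, hrest⟩
    rw [show ([(s, e), (t', e)] ++ w₂ : Word S) = (s, e) :: ((t', e) :: w₂) from rfl]
      at hrest
    rcases forget_cons hrest with ⟨i, rest2, rfl, hrest2⟩
    rcases forget_cons hrest2 with ⟨j, b, rfl, hb⟩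
    refine ⟨a ++ [((t', j), e), ((s, i), e)] ++ b, ?_, ?_⟩
    · simpa using AStep.comm1 (rel := rel) a b s t' i j e hrel
    · simp only [forgetIdx_append, ha, hb]
      rfl
  | comm2 w₁ w₂ s t' e hrel =>
    rw [List.append_assoc] at hf
    rcases forget_split hf with ⟨a, rest, rfl, ha, hrest⟩
    rw [show ([(s, e), (t', !e)] ++ w₂ : Word S) = (s, e) :: ((t', !e) :: w₂) from rfl]
      at hrest
    rcases forget_cons hrest with ⟨i, rest2, rfl, hrest2⟩
    rcases forget_cons hrest2 with ⟨j, b, rfl, hb⟩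
    refine ⟨a ++ [((t', j), !e), ((s, i), e)] ++ b, ?_, ?_⟩
    · simpa using AStep.comm2 (rel := rel) a b s t' i j e hrel
    · simp only [forgetIdx_append, ha, hb]
      rfl
  | ins w₁ w₂ s e =>
    rcases forget_split hf with ⟨a, b, rfl, ha, hb⟩
    set i := ((a ++ b).map fun p => p.1.2).foldr max 0 + 1 with hi
    have hlt : ∀ p ∈ a ++ b, p.1.2 < i := by
      intro p hp
      have := le_foldr_max ((a ++ b).map fun p => p.1.2) p.1.2
        (List.mem_map_of_mem (f := fun p => p.1.2) hp)
      omega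
    refine ⟨a ++ [((s, i), e), ((s, i), !e)] ++ b, AStep.ins a b s i e hlt, ?_⟩
    simp only [forgetIdx_append, ha, hb]
    rfl

theorem lift_special_sequence {S : Type} [DecidableEq S]
    (rel : S → S → Prop) (m : ℕ)
    (w : Fin (m + 1) → Word S) (ty : Fin m → TType)
    (hstep : ∀ k : Fin m, RStep rel (ty k) (w k.castSucc) (w k.succ)) :
    ∃ tw : Fin (m + 1) → AWord S,
      tw 0 = withZero (w 0) ∧
      (∀ k : Fin (m + 1), forgetIdx (tw k) = w k) ∧
      (∀ k : Fin m, AStep rel (ty k) (tw k.castSucc) (tw k.succ)) := by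
  induction m with
  | zero =>
    refine ⟨fun _ => withZero (w 0), rfl, ?_, fun k => k.elim0⟩
    intro k
    have : k = 0 := by
      apply Fin.ext
      omega
    rw [this, forgetIdx_withZero]
  | succ m ih =>
    obtain ⟨tw, h0, hf, hs⟩ :=
      ih (fun k => w k.castSucc) (fun k => ty k.castSucc)
        (fun k => by
          show RStep rel (ty k.castSucc) (w k.castSucc.castSucc) (w k.succ.castSucc)
          rw [← Fin.succ_castSucc]
          exact hstep k.castSucc)
    obtain ⟨twl, hstepl, hfl⟩ :=
      step_lift (hstep (Fin.last m)) (tw (Fin.last m)) (hf (Fin.last m))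
    refine ⟨Fin.snoc tw twl, ?_, ?_, ?_⟩
    · rw [show (0 : Fin (m + 2)) = (0 : Fin (m + 1)).castSucc from Fin.castSucc_zero.symm,
        Fin.snoc_castSucc, h0, Fin.castSucc_zero]
    · intro k
      induction k using Fin.lastCases with
      | last =>
        rw [Fin.snoc_last, hfl, Fin.succ_last]
      | cast j =>
        rw [Fin.snoc_castSucc, hf j]
    · intro k
      induction k using Fin.lastCases with
      | last =>
        rw [Fin.snoc_castSucc, Fin.succ_last, Fin.snoc_last]
        exact hstepl
      | cast j =>
        have h2 : j.castSucc.succ = j.succ.castSucc := Fin.succ_castSucc j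
        rw [Fin.snoc_castSucc, h2, Fin.snoc_castSucc]
        exact hs j

end ArtinConj
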